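/- Let m ≥ 1, let u : [m+1] → ℝ^m be affinely independent (a full-dimensional simplex in ℝ^m) and let c ∈ ℝ^m satisfy ⟪c, u_i⟫ < ⟪c, u_j⟫ for all i < j. Then the slope map θ : ℝ^m → ℝ^m, θ(ω) = (τ^ω(1), …, τ^ω(m)), is a continuous bijection from ℝ^m onto ℝ^m. -/

import Mathlib

open scoped RealInnerProductSpace

/-- The slope `ρ^ω(i,j)` of the edge from vertex `u i` to vertex `u j`,
with respect to the objective direction `c`. -/
noncomputable def rho {n d : ℕ} (u : Fin n → EuclideanSpace ℝ (Fin d))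
    (c ω : EuclideanSpace ℝ (Fin d)) (i j : Fin n) : ℝ :=
  ⟪ω, u j - u i⟫ / ⟪c, u j - u i⟫

/-- `τ^ω(i)`: the maximal slope from vertex `i` to a later vertex
(the supremum of the finite set of slopes `ρ^ω(i,j)` for `i < j`;
it is meaningful for non-maximal `i`, where this set is nonempty). -/
noncomputable def tau {n d : ℕ} (u : Fin n → EuclideanSpace ℝ (Fin d))
    (c ω : EuclideanSpace ℝ (Fin d)) (i : Fin n) : ℝ :=
  sSup {x : ℝ | ∃ j : Fin n, i < j ∧ x = rho u c ω i j}

/-- `ω` is generic: for each non-maximal vertex `i` there is a unique `j > i`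
whose slope attains the maximal slope `τ^ω(i)`. -/
def Generic {n d : ℕ} (u : Fin n → EuclideanSpace ℝ (Fin d))
    (c ω : EuclideanSpace ℝ (Fin d)) : Prop :=
  ∀ i : Fin n, (i : ℕ) + 1 < n →
    ∃! j : Fin n, i < j ∧ rho u c ω i j = tau u c ω i

/-- `A` is the max-slope arborescence `A^ω`: it fixes the maximal vertex, and
sends every other vertex `i` to an improving neighbour attaining `τ^ω(i)`. -/
def IsArbo {n d : ℕ} (u : Fin n → EuclideanSpace ℝ (Fin d))
    (c ω : EuclideanSpace ℝ (Fin d)) (A : Fin n → Fin n) : Prop :=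
  (∀ i : Fin n, (i : ℕ) + 1 = n → A i = i) ∧
  (∀ i : Fin n, (i : ℕ) + 1 < n →
    i < A i ∧ rho u c ω i (A i) = tau u c ω i)

/-- The slope map `θ : ℝ^m → ℝ^m`, sending `ω` to its slope vector
`(τ^ω(1), …, τ^ω(m))`. -/
noncomputable def theta {m : ℕ} (u : Fin (m + 1) → EuclideanSpace ℝ (Fin m))
    (c : EuclideanSpace ℝ (Fin m)) (ω : EuclideanSpace ℝ (Fin m)) : Fin m → ℝ :=
  fun i => tau u c ω i.castSucc

/-- `tau` is the maximum of the finitely many slopes to later vertices. -/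
lemma tau_eq_sup' {n d : ℕ} (u : Fin n → EuclideanSpace ℝ (Fin d))
    (c ω : EuclideanSpace ℝ (Fin d)) (i : Fin n) (h : (Finset.Ioi i).Nonempty) :
    tau u c ω i = (Finset.Ioi i).sup' h (rho u c ω i) := by
  rw [Finset.sup'_eq_csSup_image, tau]
  congr 1
  ext x
  simp only [Set.mem_setOf_eq, Set.mem_image, Finset.coe_Ioi, Set.mem_Ioi]
  constructor
  · rintro ⟨j, hj, rfl⟩; exact ⟨j, hj, rfl⟩
  · rintro ⟨j, hj, rfl⟩; exact ⟨j, hj, rfl⟩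

/-- The linear map recording the inner products with the edge vectors from the
last vertex. -/
noncomputable def Lmap {m : ℕ} (u : Fin (m + 1) → EuclideanSpace ℝ (Fin m)) :
    EuclideanSpace ℝ (Fin m) →ₗ[ℝ] (Fin m → ℝ) where
  toFun ω := fun j => ⟪ω, u j.castSucc - u (Fin.last m)⟫
  map_add' x y := by funext j; simp [inner_add_left]
  map_smul' r x := by funext j; simp [real_inner_smul_left, inner, Finset.mul_sum, mul_assoc]; exact Finset.sum_congr rfl fun _ _ => by ring

/-- The edge vectors of a full-dimensional simplex span the whole space. -/
lemma span_top {m : ℕ} (u : Fin (m + 1) → EuclideanSpace ℝ (Fin m))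
    (hu : AffineIndependent ℝ u) :
    Submodule.span ℝ (Set.range fun j : Fin m => u j.castSucc - u (Fin.last m)) = ⊤ := by
  have h1 := (affineIndependent_iff_linearIndependent_vsub ℝ u (Fin.last m)).mp hu
  let e : Fin m ≃ {x : Fin (m + 1) // x ≠ Fin.last m} :=
    { toFun := fun j => ⟨j.castSucc, (Fin.castSucc_lt_last j).ne⟩
      invFun := fun x => (x : Fin (m + 1)).castPred x.2
      left_inv := fun j => Fin.castPred_castSucc _
      right_inv := fun x => by ext; simp [Fin.castSucc_castPred] }
  have h2 : LinearIndependent ℝ fun j : Fin m => u j.castSucc - u (Fin.last m) := by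
    have := h1.comp e e.injective
    simpa [e, Function.comp_def, vsub_eq_sub] using this
  exact h2.span_eq_top_of_card_eq_finrank' (by simp [finrank_euclideanSpace_fin])

/-- A vector orthogonal to all edge vectors of a full-dimensional simplex is zero. -/
lemma orth_eq_zero {m : ℕ} (u : Fin (m + 1) → EuclideanSpace ℝ (Fin m))
    (hu : AffineIndependent ℝ u) (x : EuclideanSpace ℝ (Fin m))
    (h : ∀ j : Fin m, ⟪x, u j.castSucc - u (Fin.last m)⟫ = 0) : x = 0 := by
  have hx : ∀ v ∈ Submodule.span ℝ
      (Set.range fun j : Fin m => u j.castSucc - u (Fin.last m)), ⟪x, v⟫ = 0 := by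
    intro v hv
    induction hv using Submodule.span_induction with
    | mem v hv => obtain ⟨j, rfl⟩ := hv; exact h j
    | zero => simp
    | add a b _ _ ha hb => rw [inner_add_right, ha, hb, add_zero]
    | smul r a _ ha => rw [real_inner_smul_right, ha, mul_zero]
  exact inner_self_eq_zero.mp (hx x (by rw [span_top u hu]; trivial))

/-- For a full-dimensional simplex, `Lmap` is surjective. -/
lemma Lmap_surjective {m : ℕ} (u : Fin (m + 1) → EuclideanSpace ℝ (Fin m))
    (hu : AffineIndependent ℝ u) : Function.Surjective (Lmap u) := by
  have hinj : Function.Injective (Lmap u) := by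
    intro a b hab
    have h0 : Lmap u (a - b) = 0 := by rw [map_sub, hab, sub_self]
    have : a - b = 0 := orth_eq_zero u hu _ fun j => congrFun h0 j
    exact sub_eq_zero.mp this
  have H : Module.finrank ℝ (EuclideanSpace ℝ (Fin m)) = Module.finrank ℝ (Fin m → ℝ) := by
    rw [finrank_euclideanSpace_fin, Module.finrank_pi, Fintype.card_fin]
  exact (LinearMap.injective_iff_surjective_of_finrank_eq_finrank H).mp hinj

/-- for a full-dimensional simplex, the slope map `θ` is a
continuous bijection from `ℝ^m` onto `ℝ^m`. -/
theorem slope_map_continuous_bijective (m : ℕ) (hm : 1 ≤ m)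
    (u : Fin (m + 1) → EuclideanSpace ℝ (Fin m)) (hu : AffineIndependent ℝ u)
    (c : EuclideanSpace ℝ (Fin m))
    (hc : ∀ i j : Fin (m + 1), i < j → ⟪c, u i⟫ < ⟪c, u j⟫) :
    Continuous (theta u c) ∧ Function.Bijective (theta u c) := by
  have hD : ∀ i j : Fin (m + 1), i < j → 0 < ⟪c, u j - u i⟫ := by
    intro i j hij
    rw [inner_sub_right]
    linarith [hc i j hij]
  have hne : ∀ i : Fin m, (Finset.Ioi i.castSucc).Nonempty :=
    fun i => ⟨Fin.last m, Finset.mem_Ioi.2 (Fin.castSucc_lt_last i)⟩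
  have htheta : ∀ ω (i : Fin m),
      theta u c ω i = (Finset.Ioi i.castSucc).sup' (hne i) (rho u c ω i.castSucc) :=
    fun ω i => tau_eq_sup' u c ω i.castSucc (hne i)
  refine ⟨?_, ?_, ?_⟩
  · -- continuity
    refine continuous_pi fun i => ?_
    have heq : (fun ω => theta u c ω i)
        = fun ω => (Finset.Ioi i.castSucc).sup' (hne i) (fun j => rho u c ω i.castSucc j) := by
      funext ω; exact htheta ω i
    rw [heq]
    refine Continuous.finset_sup'_apply (hne i) fun j _ => ?_
    exact (continuous_id.inner continuous_const).div_const _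
  · -- injective
    intro ω ω' hθ
    set x := ω' - ω with hxdef
    have key : ∀ k : ℕ, ∀ i : Fin (m + 1), m ≤ k + (i : ℕ) →
        ⟪x, u i - u (Fin.last m)⟫ = 0 := by
      intro k
      induction k with
      | zero =>
        intro i hi
        have : i = Fin.last m := Fin.ext (le_antisymm (Nat.lt_succ_iff.mp i.isLt) (by omega))
        rw [this, sub_self, inner_zero_right]
      | succ k ih =>
        intro i hi
        by_cases hlast : i = Fin.last m
        · rw [hlast, sub_self, inner_zero_right]
        have hvne : (i : ℕ) ≠ m := fun h => hlast (Fin.ext (by simpa [Fin.val_last] using h))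
        have hi' : (i : ℕ) < m := by have := i.isLt; omega
        set i' : Fin m := ⟨(i : ℕ), hi'⟩ with hi'def
        have hii' : i'.castSucc = i := Fin.ext rfl
        have hne' : (Finset.Ioi i).Nonempty := by rw [← hii']; exact hne i'
        have hIH : ∀ j : Fin (m + 1), i < j → ⟪x, u j - u (Fin.last m)⟫ = 0 := by
          intro j hj
          exact ih j (by have := (Fin.lt_iff_val_lt_val.mp hj); omega)
        set d := ⟪x, u i - u (Fin.last m)⟫ with hd
        have hrho : ∀ j ∈ Finset.Ioi i,
            rho u c ω' i j = rho u c ω i j - d / ⟪c, u j - u i⟫ := by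
          intro j hj
          have hj' := Finset.mem_Ioi.mp hj
          have h2 := hIH j hj'
          rw [inner_sub_right] at h2
          have h1 : ⟪x, u j - u i⟫ = -d := by
            rw [inner_sub_right, hd, inner_sub_right]
            linarith
          have hωω' : ⟪ω', u j - u i⟫ = ⟪ω, u j - u i⟫ - d := by
            rw [hxdef, inner_sub_left] at h1
            linarith
          rw [rho, rho, hωω', sub_div]
        have htau : tau u c ω i = tau u c ω' i := by
          have := congrFun hθ i'
          rw [theta, theta, hii'] at this
          exact this
        rcases lt_trichotomy d 0 with hdlt | hdeq | hdgt
        · exfalso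
          obtain ⟨j0, hj0mem, hj0⟩ := Finset.exists_mem_eq_sup' hne' (rho u c ω i)
          have hDj := hD i j0 (Finset.mem_Ioi.mp hj0mem)
          have hle : rho u c ω' i j0 ≤ tau u c ω' i := by
            rw [tau_eq_sup' u c ω' i hne']
            exact Finset.le_sup' _ hj0mem
          have hdiv : d / ⟪c, u j0 - u i⟫ < 0 := div_neg_of_neg_of_pos hdlt hDj
          have h3 := hrho j0 hj0mem
          have h4 : tau u c ω i = rho u c ω i j0 := by
            rw [tau_eq_sup' u c ω i hne', hj0]
          linarith
        · exact hdeq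
        · exfalso
          obtain ⟨j0, hj0mem, hj0⟩ := Finset.exists_mem_eq_sup' hne' (rho u c ω' i)
          have hDj := hD i j0 (Finset.mem_Ioi.mp hj0mem)
          have hle : rho u c ω i j0 ≤ tau u c ω i := by
            rw [tau_eq_sup' u c ω i hne']
            exact Finset.le_sup' _ hj0mem
          have hdiv : 0 < d / ⟪c, u j0 - u i⟫ := div_pos hdgt hDj
          have h3 := hrho j0 hj0mem
          have h4 : tau u c ω' i = rho u c ω' i j0 := by
            rw [tau_eq_sup' u c ω' i hne', hj0]
          linarith
    have hzero : ∀ j : Fin m, ⟪x, u j.castSucc - u (Fin.last m)⟫ = 0 :=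
      fun j => key m j.castSucc (by omega)
    have hx0 : x = 0 := orth_eq_zero u hu x hzero
    have : ω' = ω := sub_eq_zero.mp hx0
    exact this.symm
  · -- surjective
    intro y
    have build : ∀ k : ℕ, ∃ s : Fin (m + 1) → ℝ, s (Fin.last m) = 0 ∧
        ∀ i : Fin m, m ≤ k + (i : ℕ) →
          s i.castSucc = (Finset.Ioi i.castSucc).sup' (hne i)
            (fun j => s j - y i * ⟪c, u j - u i.castSucc⟫) := by
      intro k
      induction k with
      | zero =>
        exact ⟨fun _ => 0, rfl, fun i hi => absurd hi (by have := i.isLt; omega)⟩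
      | succ k ih =>
        obtain ⟨s, hlast, hs⟩ := ih
        by_cases hk : m ≤ k
        · exact ⟨s, hlast, fun i hi => hs i (by omega)⟩
        push_neg at hk
        set i0 : Fin m := ⟨m - k - 1, by omega⟩ with hi0
        set v := (Finset.Ioi i0.castSucc).sup' (hne i0)
          (fun j => s j - y i0 * ⟪c, u j - u i0.castSucc⟫) with hv
        refine ⟨Function.update s i0.castSucc v, ?_, ?_⟩
        · rw [Function.update_of_ne (Fin.castSucc_lt_last i0).ne', hlast]
        · intro i hi
          by_cases hii : i = i0
          · subst hii
            rw [Function.update_self, hv]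
            refine Finset.sup'_congr (hne i0) rfl fun j hj => ?_
            rw [Function.update_of_ne (Finset.mem_Ioi.mp hj).ne']
          · have hival : (i : ℕ) ≠ m - k - 1 := fun h => hii (Fin.ext h)
            have him : m ≤ k + (i : ℕ) := by omega
            rw [Function.update_of_ne
              (fun h => hii (Fin.castSucc_injective m h)), hs i him]
            refine Finset.sup'_congr (hne i) rfl fun j hj => ?_
            have hji : (i : ℕ) < (j : ℕ) := by
              simpa [Fin.lt_iff_val_lt_val] using Finset.mem_Ioi.mp hj
            have : j ≠ i0.castSucc := by
              intro h
              have : (j : ℕ) = m - k - 1 := by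
                rw [h]; simp [hi0]
              omega
            rw [Function.update_of_ne this]
    obtain ⟨s, hlast, hs⟩ := build m
    obtain ⟨ω, hω⟩ := Lmap_surjective u hu (fun j => s j.castSucc)
    have hval : ∀ j : Fin (m + 1), ⟪ω, u j - u (Fin.last m)⟫ = s j := by
      intro j
      by_cases hj : j = Fin.last m
      · subst hj; rw [sub_self, inner_zero_right, hlast]
      · have := congrFun hω (j.castPred hj)
        simpa [Lmap, Fin.castSucc_castPred] using this
    have hinner : ∀ i j : Fin (m + 1), ⟪ω, u j - u i⟫ = s j - s i := by
      intro i j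
      have h1 := hval j
      have h2 := hval i
      rw [inner_sub_right] at h1 h2 ⊢
      linarith
    refine ⟨ω, funext fun i => ?_⟩
    rw [htheta]
    have hDi : ∀ j ∈ Finset.Ioi i.castSucc, 0 < ⟪c, u j - u i.castSucc⟫ :=
      fun j hj => hD _ _ (Finset.mem_Ioi.mp hj)
    apply le_antisymm
    · apply Finset.sup'_le
      intro j hj
      rw [rho, div_le_iff₀ (hDi j hj), hinner]
      have : s j - y i * ⟪c, u j - u i.castSucc⟫ ≤ s i.castSucc := by
        rw [hs i (by omega)]
        exact Finset.le_sup' (fun j => s j - y i * ⟪c, u j - u i.castSucc⟫) hj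
      linarith
    · obtain ⟨j0, hj0mem, hj0⟩ := Finset.exists_mem_eq_sup' (hne i)
        (fun j => s j - y i * ⟪c, u j - u i.castSucc⟫)
      have heq : rho u c ω i.castSucc j0 = y i := by
        rw [rho, hinner]
        have h5 : s i.castSucc = s j0 - y i * ⟪c, u j0 - u i.castSucc⟫ := by
          rw [hs i (by omega), hj0]
        rw [show s j0 - s i.castSucc = y i * ⟪c, u j0 - u i.castSucc⟫ by linarith]
        exact mul_div_cancel_right₀ _ (ne_of_gt (hDi j0 hj0mem))
      rw [← heq]
      exact Finset.le_sup' _ hj0mem
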